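/- Let ξ_r be an r-region plan of G with r > 1 and W(ξ_r) > 0. Then Σ_{ξ_{r-1} ∈ A₁(ξ_r)} γ(ξ_{r-1}) · M(ξ_r | ξ_{r-1}) = (γ(ξ_r)/K) · Σ_{{G_k, G_{k'}} ∈ AR(ξ_r)} φ(G[V_k ∪ V_{k'}] | ξ̃_{r-1}) · (W(ξ̃_{r-1})/W(ξ_r)) · (τ(G[V_k ∪ V_{k'}]) / (τ(G_k) · τ(G_{k'})))^{ρ−1} · |C(G_k, G_{k'})|, where for each adjacent pair the plan ξ̃_{r-1} is obtained from ξ_r by replacing the blocks V_k and V_{k'} with V_k ∪ V_{k'}. -/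

import Mathlib

open SimpleGraph

namespace Redist

variable {V : Type*} [Fintype V] [DecidableEq V]

/-- The subgraph of `G` induced by the vertex set `s` (the graph `G[s]`). -/
abbrev ind (G : SimpleGraph V) (s : Set V) : G.Subgraph :=
  (⊤ : G.Subgraph).induce s

/-- `T` is a spanning tree of the subgraph `H` of `G`. -/
def IsSpanningTreeOf (G : SimpleGraph V) (T H : G.Subgraph) : Prop :=
  T ≤ H ∧ T.verts = H.verts ∧ T.coe.IsTree

/-- `τ H`: the number of spanning trees of the subgraph `H`. -/
noncomputable def tau (G : SimpleGraph V) (H : G.Subgraph) : ℕ :=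
  {T : G.Subgraph | IsSpanningTreeOf G T H}.ncard

/-- `C(s, t)`: the set of edges of `G` with one endpoint in `s` and the other in `t`. -/
def crossEdges (G : SimpleGraph V) (s t : Set V) : Set (Sym2 V) :=
  {e | e ∈ G.edgeSet ∧ ∃ u v : V, e = s(u, v) ∧ u ∈ s ∧ v ∈ t}

/-- The subgraph obtained from `H` by adding the edges in `E'` (that are edges of `G`). -/
def withEdges (G : SimpleGraph V) (H : G.Subgraph) (E' : Set (Sym2 V)) : G.Subgraph where
  verts := H.verts ∪ {v | ∃ e ∈ E' ∩ G.edgeSet, v ∈ e}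
  Adj u v := H.Adj u v ∨ (s(u, v) ∈ E' ∧ G.Adj u v)
  adj_sub := by
    rintro u v (h | ⟨-, h⟩)
    · exact H.adj_sub h
    · exact h
  edge_vert := by
    rintro u v (h | ⟨h, hG⟩)
    · exact Or.inl (H.edge_vert h)
    · exact Or.inr ⟨s(u, v), ⟨h, hG⟩, Sym2.mem_mk_left u v⟩
  symm := by
    constructor
    rintro u v (h | ⟨h, hG⟩)
    · exact Or.inl h.symm
    · exact Or.inr ⟨by rwa [Sym2.eq_swap], hG.symm⟩

/-- A plan with `r` regions: a partition of the vertex set into `r` nonempty blocks,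
each inducing a connected subgraph. -/
structure Plan (G : SimpleGraph V) (r : ℕ) where
  blocks : Set (Set V)
  ncard_blocks : blocks.ncard = r
  blocks_nonempty : ∀ B ∈ blocks, B.Nonempty
  blocks_disjoint : ∀ B ∈ blocks, ∀ B' ∈ blocks, B ≠ B' → Disjoint B B'
  blocks_cover : ∀ v : V, ∃ B ∈ blocks, v ∈ B
  blocks_connected : ∀ B ∈ blocks, (ind G B).Connected

/-- `ξp` is a 1-region ancestor of `ξr`: exactly one region of `ξp` is not a region of `ξr`. -/
def IsAncestor (G : SimpleGraph V) {r : ℕ} (ξp : Plan G (r - 1)) (ξr : Plan G r) : Prop :=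
  (ξp.blocks \ ξr.blocks).ncard = 1

/-- An `r`-region forest plan: `r` vertex-disjoint trees covering all of `V`. -/
structure ForestPlan (G : SimpleGraph V) (r : ℕ) where
  trees : Set G.Subgraph
  ncard_trees : trees.ncard = r
  isTree : ∀ T ∈ trees, T.coe.IsTree
  trees_disjoint : ∀ T ∈ trees, ∀ T' ∈ trees, T ≠ T' → Disjoint T.verts T'.verts
  trees_cover : ∀ v : V, ∃ T ∈ trees, v ∈ T.verts

/-- The induced plan of a forest plan (as a family of blocks). -/
def forestBlocks (G : SimpleGraph V) {r : ℕ} (F : ForestPlan G r) : Set (Set V) :=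
  Subgraph.verts '' F.trees

/-- `Fp` is a 1-region tree ancestor of `Fr`. -/
def ForestAncestor (G : SimpleGraph V) {r : ℕ} (Fp : ForestPlan G (r - 1))
    (Fr : ForestPlan G r) : Prop :=
  (Fp.trees \ Fr.trees).ncard = 1

variable {A : Type*}

/-- The set of administrative units meeting the vertex set `s`. -/
def unitSet (η : V → A) (s : Set V) : Set A := {a | (s ∩ η ⁻¹' {a}).Nonempty}

/-- A block is hierarchically connected: its intersection with each administrative unit has
at most one connected component. -/
def HierConnectedBlock (G : SimpleGraph V) (η : V → A) (B : Set V) : Prop :=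
  ∀ a : A, (ind G (B ∩ η ⁻¹' {a})).coe.Preconnected

/-- `T` is an `η`-hierarchical tree on the region induced by `B`. -/
def IsHierTree (G : SimpleGraph V) (η : V → A) (T : G.Subgraph) (B : Set V) : Prop :=
  IsSpanningTreeOf G T (ind G B) ∧
    ∀ a : A, (B ∩ η ⁻¹' {a}).Nonempty →
      IsSpanningTreeOf G (T.induce (B ∩ η ⁻¹' {a})) (ind G (B ∩ η ⁻¹' {a}))

/-- Two blocks are administratively adjacent. -/
def AdminAdj (G : SimpleGraph V) (η : V → A) (B B' : Set V) : Prop :=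
  ∃ a : A, ∃ u v : V, G.Adj u v ∧ u ∈ B ∩ η ⁻¹' {a} ∧ v ∈ B' ∩ η ⁻¹' {a}

/-- `S` is (the set of regions of) a connected component of the administrative adjacency
graph of the plan with blocks `blocks`. -/
def IsAdminComponent (G : SimpleGraph V) (η : V → A) (blocks S : Set (Set V)) : Prop :=
  S ⊆ blocks ∧ S.Nonempty ∧
    (∀ B ∈ S, ∀ B' ∈ S,
      Relation.ReflTransGen (fun X Y => X ∈ S ∧ Y ∈ S ∧ AdminAdj G η X Y) B B') ∧
    ∀ B ∈ S, ∀ B' ∈ blocks, B' ∉ S → ¬AdminAdj G η B B'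

/-- The number of connected components of the subgraph induced by `s`. -/
noncomputable def numComponents (G : SimpleGraph V) (s : Set V) : ℕ :=
  Nat.card ((ind G s).coe.ConnectedComponent)

/-- The number of administrative splits of a family `S` of blocks. -/
noncomputable def splits [Fintype A] (G : SimpleGraph V) (η : V → A) (S : Set (Set V)) : ℕ :=
  (∑ᶠ a : A, ∑ᶠ B ∈ S, numComponents G (B ∩ η ⁻¹' {a})) -
    {a : A | ∃ B ∈ S, (B ∩ η ⁻¹' {a}).Nonempty}.ncard

/-- `T` is a hierarchical plan tree for the plan with blocks `blocks`. -/
def IsHierPlanTree (G : SimpleGraph V) (η : V → A) (T : G.Subgraph)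
    (blocks : Set (Set V)) : Prop :=
  IsHierTree G η T Set.univ ∧ ∀ B ∈ blocks, IsHierTree G η (T.induce B) B

/-- The plan with blocks `blocks` is hierarchical. -/
def IsHierPlanBlocks (G : SimpleGraph V) (η : V → A) (blocks : Set (Set V)) : Prop :=
  ∃ T : G.Subgraph, IsHierPlanTree G η T blocks

/-- The effective region tree boundary length between two vertex-disjoint trees. -/
noncomputable def EffB (G : SimpleGraph V) (p : G.Subgraph → Sym2 V → ℝ)
    (Tk Tk' : G.Subgraph) : ℝ :=
  ∑ᶠ e ∈ crossEdges G Tk.verts Tk'.verts, p (withEdges G (Tk ⊔ Tk') {e}) e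


section Helpers

variable {V : Type*} [Fintype V] [DecidableEq V]

lemma edgeSet_delete' {W : Type*} (H : SimpleGraph W) (e : Sym2 W) (he : e ∈ H.edgeSet) :
    (H \ SimpleGraph.fromEdgeSet {e}).edgeSet = H.edgeSet \ {e} := by
  ext f
  simp only [edgeSet_sdiff, edgeSet_fromEdgeSet, Set.mem_diff, Set.mem_singleton_iff,
    Set.mem_setOf_eq]
  constructor
  · rintro ⟨hf, h⟩
    refine ⟨hf, fun hfe => h ⟨hfe, ?_⟩⟩
    subst hfe
    exact SimpleGraph.not_isDiag_of_mem_edgeSet _ he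
  · rintro ⟨hf, h⟩
    exact ⟨hf, fun ⟨h1, _⟩ => h h1⟩

lemma preconnected_delete' {W : Type*} (H : SimpleGraph W) {u v : W}
    (hr : (H \ SimpleGraph.fromEdgeSet {s(u, v)}).Reachable u v) (hp : H.Preconnected) :
    (H \ SimpleGraph.fromEdgeSet {s(u, v)}).Preconnected := by
  intro a b
  obtain ⟨p⟩ := hp a b
  induction p with
  | nil => exact Reachable.refl _
  | @cons x z y h q ih =>
    refine Reachable.trans ?_ ih
    by_cases hxz : s(x, z) = s(u, v)
    · rw [Sym2.eq_iff] at hxz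
      rcases hxz with ⟨rfl, rfl⟩ | ⟨rfl, rfl⟩
      · exact hr
      · exact hr.symm
    · exact SimpleGraph.Adj.reachable (by simp [h, hxz])

lemma exists_spanning_tree' {W : Type*} [Finite W] :
    ∀ (n : ℕ) (H : SimpleGraph W), H.edgeSet.ncard = n →
    H.Connected → ∃ T : SimpleGraph W, T ≤ H ∧ T.IsTree := by
  intro n
  induction n using Nat.strong_induction_on with
  | _ n ih =>
    intro H hcard hc
    by_cases hac : H.IsAcyclic
    · exact ⟨H, le_rfl, ⟨hc, hac⟩⟩
    · rw [isAcyclic_iff_forall_adj_isBridge] at hac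
      push_neg at hac
      obtain ⟨u, v, hadj, hbr⟩ := hac
      rw [isBridge_iff] at hbr
      push_neg at hbr
      have hr : (H \ SimpleGraph.fromEdgeSet {s(u, v)}).Reachable u v := hbr
      have hE : (H \ SimpleGraph.fromEdgeSet {s(u, v)}).edgeSet = H.edgeSet \ {s(u, v)} :=
        edgeSet_delete' H _ hadj
      have hlt : (H \ SimpleGraph.fromEdgeSet {s(u, v)}).edgeSet.ncard < n := by
        rw [hE, ← hcard]
        exact Set.ncard_diff_singleton_lt_of_mem hadj (Set.toFinite _)
      have hc' : (H \ SimpleGraph.fromEdgeSet {s(u, v)}).Connected := by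
        rw [connected_iff] at hc ⊢
        exact ⟨preconnected_delete' H hr hc.1, hc.2⟩
      obtain ⟨T, hT, hTt⟩ := ih _ hlt _ rfl hc'
      exact ⟨T, hT.trans sdiff_le, hTt⟩

instance finite_subgraph (G : SimpleGraph V) : Finite G.Subgraph :=
  Finite.of_injective (fun H => (H.verts, H.Adj)) (by
    rintro H H' h
    simp only [Prod.mk.injEq] at h
    exact Subgraph.ext h.1 h.2)

instance finite_plan (G : SimpleGraph V) (r : ℕ) : Finite (Plan G r) :=
  Finite.of_injective Plan.blocks (by
    rintro ⟨⟩ ⟨⟩ h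
    simpa using h)

lemma plan_ext {G : SimpleGraph V} {r : ℕ} {ξ ξ' : Plan G r} (h : ξ.blocks = ξ'.blocks) :
    ξ = ξ' := by
  cases ξ; cases ξ'; simpa using h

lemma tau_pos {G : SimpleGraph V} {B : Set V} (hc : (ind G B).Connected) :
    0 < tau G (ind G B) := by
  rw [tau, Set.ncard_pos (Set.toFinite _)]
  have hcc : (ind G B).coe.Connected := hc.coe
  obtain ⟨T, hle, hT⟩ := exists_spanning_tree' (W := ↥B) _ (ind G B).coe rfl hcc
  refine ⟨{ verts := B
            Adj := fun u v => ∃ (hu : u ∈ B) (hv : v ∈ B), T.Adj ⟨u, hu⟩ ⟨v, hv⟩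
            adj_sub := ?_
            edge_vert := ?_
            symm := ?_ }, ?_, rfl, ?_⟩
  · rintro u v ⟨hu, hv, h⟩
    have := hle h
    simpa using this.2.2
  · rintro u v ⟨hu, hv, h⟩
    exact hu
  · constructor
    rintro u v ⟨hu, hv, h⟩
    exact ⟨hv, hu, h.symm⟩
  · constructor
    · rfl
    · rintro u v ⟨hu, hv, h⟩
      exact ⟨hu, hv, by simpa using (hle h).2.2⟩
  · convert hT using 1
    ext ⟨a, ha⟩ ⟨b, hb⟩
    simp only [Subgraph.coe_adj]
    constructor
    · rintro ⟨hu, hv, h⟩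
      convert h
    · intro h
      exact ⟨ha, hb, h⟩

end Helpers

section Helpers2

variable {V : Type*} [Fintype V] [DecidableEq V] {G : SimpleGraph V}

omit [Fintype V] [DecidableEq V] in
lemma cross_of_walk {s t : Set V} (hdisj : Disjoint s t)
    {x y : ↥(s ∪ t : Set V)} (w : (ind G (s ∪ t)).coe.Walk x y)
    (hx : x.val ∈ s) (hy : y.val ∈ t) : (crossEdges G s t).Nonempty := by
  induction w with
  | nil => exact absurd hy (Set.disjoint_left.mp hdisj hx)
  | @cons a c b h p ih =>
    by_cases hct : c.val ∈ t
    · have hadj : G.Adj a.val c.val := by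
        exact (ind G (s ∪ t)).adj_sub h
      exact ⟨s(a.val, c.val), hadj, a.val, c.val, rfl, hx, hct⟩
    · have hcs : c.val ∈ s := c.2.resolve_right hct
      exact ih hcs hy

omit [Fintype V] [DecidableEq V] in
lemma cross_nonempty_of_connected {s t : Set V} (hs : s.Nonempty) (ht : t.Nonempty)
    (hdisj : Disjoint s t) (hconn : (ind G (s ∪ t)).Connected) :
    (crossEdges G s t).Nonempty := by
  obtain ⟨u, hu⟩ := hs
  obtain ⟨v, hv⟩ := ht
  obtain ⟨w⟩ := hconn.coe ⟨u, Or.inl hu⟩ ⟨v, Or.inr hv⟩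
  exact cross_of_walk hdisj w hu hv

omit [Fintype V] [DecidableEq V] in
lemma union_connected_of_cross {s t : Set V} (hs : (ind G s).Connected)
    (ht : (ind G t).Connected) (h : (crossEdges G s t).Nonempty) :
    (ind G (s ∪ t)).Connected := by
  obtain ⟨e, he, u, v, rfl, hus, hvt⟩ := h
  have hadj : G.Adj u v := he
  have hconn := SimpleGraph.Subgraph.connected_induce_top_sup hs.preconnected ht.preconnected hus hvt hadj
  refine hconn.mono ?_ ?_
  · refine sup_le (sup_le ?_ ?_) ?_
    · exact Subgraph.induce_mono le_rfl (by
        rintro x (rfl | rfl)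
        · exact Or.inl hus
        · exact Or.inr hvt)
    · exact Subgraph.induce_mono le_rfl Set.subset_union_left
    · exact Subgraph.induce_mono le_rfl Set.subset_union_right
  · simp only [Subgraph.verts_sup, Subgraph.induce_verts]
    rw [Set.union_assoc]
    apply Set.union_eq_self_of_subset_left
    rintro x (rfl | rfl)
    · exact Or.inl hus
    · exact Or.inr hvt

end Helpers2

section Helpers3

variable {V : Type*} [Fintype V] [DecidableEq V] {G : SimpleGraph V}

omit [Fintype V] [DecidableEq V] in
lemma union_notMem {r : ℕ} (ξr : Plan G r) {Bk Bk' : Set V} (hk : Bk ∈ ξr.blocks)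
    (hk' : Bk' ∈ ξr.blocks) (hne : Bk ≠ Bk') : Bk ∪ Bk' ∉ ξr.blocks := by
  intro hu
  obtain ⟨v, hv⟩ := ξr.blocks_nonempty Bk hk
  by_cases heq : Bk ∪ Bk' = Bk
  · obtain ⟨w, hw⟩ := ξr.blocks_nonempty Bk' hk'
    have hwk : w ∈ Bk := heq ▸ (Or.inr hw : w ∈ Bk ∪ Bk')
    exact Set.disjoint_left.mp (ξr.blocks_disjoint Bk hk Bk' hk' hne) hwk hw
  · exact Set.disjoint_left.mp (ξr.blocks_disjoint _ hu Bk hk heq) (Or.inl hv) hv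

lemma merge_plan {r : ℕ} (hr : 1 < r) (ξr : Plan G r) {Bk Bk' : Set V} (hk : Bk ∈ ξr.blocks)
    (hk' : Bk' ∈ ξr.blocks) (hne : Bk ≠ Bk') (hcross : (crossEdges G Bk Bk').Nonempty) :
    ∃ ξp : Plan G (r - 1), ξp.blocks = (ξr.blocks \ {Bk, Bk'}) ∪ {Bk ∪ Bk'} := by
  have hu : Bk ∪ Bk' ∉ ξr.blocks := union_notMem ξr hk hk' hne
  refine ⟨⟨(ξr.blocks \ {Bk, Bk'}) ∪ {Bk ∪ Bk'}, ?_, ?_, ?_, ?_, ?_⟩, rfl⟩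
  · rw [Set.ncard_union_eq (Set.disjoint_singleton_right.mpr (fun h => hu h.1))
      (Set.toFinite _) (Set.toFinite _), Set.ncard_diff (by
        rintro B (rfl | rfl)
        · exact hk
        · exact hk') (Set.toFinite _), Set.ncard_pair hne, ξr.ncard_blocks,
      Set.ncard_singleton]
    omega
  · rintro B (⟨hB, -⟩ | rfl)
    · exact ξr.blocks_nonempty B hB
    · obtain ⟨v, hv⟩ := ξr.blocks_nonempty Bk hk
      exact ⟨v, Or.inl hv⟩
  · have hdisj : ∀ B ∈ ξr.blocks \ {Bk, Bk'}, Disjoint (Bk ∪ Bk') B := by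
      rintro B ⟨hB, hB2⟩
      refine Disjoint.union_left ?_ ?_
      · exact ξr.blocks_disjoint Bk hk B hB (fun h => hB2 (Or.inl h.symm))
      · exact ξr.blocks_disjoint Bk' hk' B hB (fun h => hB2 (Or.inr h.symm))
    rintro B (⟨hB, hB2⟩ | rfl) B' (⟨hB', hB2'⟩ | rfl) hBB'
    · exact ξr.blocks_disjoint B hB B' hB' hBB'
    · exact (hdisj B ⟨hB, hB2⟩).symm
    · exact hdisj B' ⟨hB', hB2'⟩
    · exact absurd rfl hBB'
  · intro v
    obtain ⟨B, hB, hvB⟩ := ξr.blocks_cover v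
    by_cases hBp : B ∈ ({Bk, Bk'} : Set (Set V))
    · refine ⟨Bk ∪ Bk', Or.inr rfl, ?_⟩
      rcases hBp with rfl | rfl
      · exact Or.inl hvB
      · exact Or.inr hvB
    · exact ⟨B, Or.inl ⟨hB, hBp⟩, hvB⟩
  · rintro B (⟨hB, -⟩ | rfl)
    · exact ξr.blocks_connected B hB
    · exact union_connected_of_cross (ξr.blocks_connected Bk hk)
        (ξr.blocks_connected Bk' hk') hcross

omit [Fintype V] [DecidableEq V] in
lemma merged_diffs {r : ℕ} (ξr : Plan G r) {Bk Bk' : Set V} (hk : Bk ∈ ξr.blocks)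
    (hk' : Bk' ∈ ξr.blocks) (hne : Bk ≠ Bk') {ξp : Plan G (r - 1)}
    (hb : ξp.blocks = (ξr.blocks \ {Bk, Bk'}) ∪ {Bk ∪ Bk'}) :
    ξp.blocks \ ξr.blocks = {Bk ∪ Bk'} ∧ ξr.blocks \ ξp.blocks = {Bk, Bk'} := by
  have hu : Bk ∪ Bk' ∉ ξr.blocks := union_notMem ξr hk hk' hne
  rw [hb]
  constructor
  · ext B
    constructor
    · rintro ⟨(⟨hB, -⟩ | rfl), hBS⟩
      · exact absurd hB hBS
      · rfl
    · rintro rfl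
      exact ⟨Or.inr rfl, hu⟩
  · ext B
    constructor
    · rintro ⟨hBS, hnot⟩
      by_contra h
      exact hnot (Or.inl ⟨hBS, h⟩)
    · rintro (rfl | rfl)
      · refine ⟨hk, ?_⟩
        rintro (⟨-, h2⟩ | h3)
        · exact h2 (Or.inl rfl)
        · exact hu (h3 ▸ hk)
      · refine ⟨hk', ?_⟩
        rintro (⟨-, h2⟩ | h3)
        · exact h2 (Or.inr rfl)
        · exact hu (h3 ▸ hk')

end Helpers3

section Helpers4

variable {V : Type*} [Fintype V] [DecidableEq V] {G : SimpleGraph V}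

omit [DecidableEq V] in
lemma ancestor_structure {r : ℕ} (hr : 1 < r) {ξr : Plan G r} {ξp : Plan G (r - 1)}
    (h : IsAncestor G ξp ξr) :
    ∃ Bk Bk', Bk ∈ ξr.blocks ∧ Bk' ∈ ξr.blocks ∧ Bk ≠ Bk' ∧
      (crossEdges G Bk Bk').Nonempty ∧
      ξr.blocks \ ξp.blocks = {Bk, Bk'} ∧
      Bk ∪ Bk' ∈ ξp.blocks ∧
      ξp.blocks = (ξr.blocks \ {Bk, Bk'}) ∪ {Bk ∪ Bk'} := by
  obtain ⟨Bold, hBold⟩ := Set.ncard_eq_one.mp h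
  have hBoldmem : Bold ∈ ξp.blocks \ ξr.blocks := hBold ▸ rfl
  have hBoldp : Bold ∈ ξp.blocks := hBoldmem.1
  have hBoldr : Bold ∉ ξr.blocks := hBoldmem.2
  have hsub : ∀ B ∈ ξp.blocks, B ≠ Bold → B ∈ ξr.blocks := by
    intro B hB hne
    by_contra h'
    exact hne (by have : B ∈ ξp.blocks \ ξr.blocks := ⟨hB, h'⟩; rwa [hBold] at this)
  have h2 : (ξr.blocks \ ξp.blocks).ncard = 2 := by
    have h1 := Set.ncard_inter_add_ncard_diff_eq_ncard ξp.blocks ξr.blocks (Set.toFinite _)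
    have h2 := Set.ncard_inter_add_ncard_diff_eq_ncard ξr.blocks ξp.blocks (Set.toFinite _)
    rw [Set.inter_comm] at h2
    rw [h, ξp.ncard_blocks] at h1
    rw [ξr.ncard_blocks] at h2
    omega
  obtain ⟨Bk, Bk', hne, hpair⟩ := Set.ncard_eq_two.mp h2
  have hkd : Bk ∈ ξr.blocks \ ξp.blocks := hpair ▸ Or.inl rfl
  have hk'd : Bk' ∈ ξr.blocks \ ξp.blocks := hpair ▸ Or.inr rfl
  have hBoldEq : Bold = Bk ∪ Bk' := by
    apply Set.Subset.antisymm
    · intro v hv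
      obtain ⟨B, hB, hvB⟩ := ξr.blocks_cover v
      by_cases hBp : B ∈ ξp.blocks
      · exfalso
        have hBne : B ≠ Bold := fun hEq => hBoldr (hEq ▸ hB)
        exact Set.disjoint_left.mp (ξp.blocks_disjoint B hBp Bold hBoldp hBne) hvB hv
      · have : B ∈ ξr.blocks \ ξp.blocks := ⟨hB, hBp⟩
        rw [hpair] at this
        rcases this with rfl | rfl
        · exact Or.inl hvB
        · exact Or.inr hvB
    · rintro v (hv | hv) <;>
      · obtain ⟨B', hB', hvB'⟩ := ξp.blocks_cover v
        by_cases hEq : B' = Bold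
        · exact hEq ▸ hvB'
        · exfalso
          have hB'r : B' ∈ ξr.blocks := hsub B' hB' hEq
          first
          | exact Set.disjoint_left.mp
              (ξr.blocks_disjoint B' hB'r Bk hkd.1 (fun hh => hkd.2 (hh ▸ hB'))) hvB' hv
          | exact Set.disjoint_left.mp
              (ξr.blocks_disjoint B' hB'r Bk' hk'd.1 (fun hh => hk'd.2 (hh ▸ hB'))) hvB' hv
  have hcross : (crossEdges G Bk Bk').Nonempty := by
    apply cross_nonempty_of_connected (ξr.blocks_nonempty Bk hkd.1)
      (ξr.blocks_nonempty Bk' hk'd.1)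
      (ξr.blocks_disjoint Bk hkd.1 Bk' hk'd.1 hne)
    have := ξp.blocks_connected Bold hBoldp
    rwa [hBoldEq] at this
  refine ⟨Bk, Bk', hkd.1, hk'd.1, hne, hcross, hpair, hBoldEq ▸ hBoldp, ?_⟩
  ext B
  constructor
  · intro hB
    by_cases hEq : B = Bold
    · exact Or.inr (by rw [hEq, hBoldEq]; rfl)
    · refine Or.inl ⟨hsub B hB hEq, ?_⟩
      rintro (rfl | rfl)
      · exact hkd.2 hB
      · exact hk'd.2 hB
  · rintro (⟨hBr, hB2⟩ | hB1)
    · by_contra hBp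
      have : B ∈ ξr.blocks \ ξp.blocks := ⟨hBr, hBp⟩
      rw [hpair] at this
      exact hB2 this
    · rw [Set.mem_singleton_iff] at hB1
      rw [hB1, ← hBoldEq]
      exact hBoldp

end Helpers4

/-- The marginal-proposal identity
`Σ_{ξp ∈ A₁(ξr)} γ(ξp)·M(ξr|ξp) = (γ(ξr)/K)·Σ_{{G_k,G_{k'}} ∈ AR(ξr)} φ(…)·(W(ξ̃)/W(ξr))·
(τ(G_k∪G_{k'})/(τ(G_k)τ(G_{k'})))^{ρ-1}·|C(G_k,G_{k'})|`.
Here `W`, `φ` act on plans through their block families, `γ P = W P · ∏_{B∈P} τ(G[B])^ρ`,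
`M` is the forward kernel (pinned by `hM` on ancestors), and `g` is the summand on
unordered adjacent pairs (pinned by `hg`). -/
theorem stmt_8 (G : SimpleGraph V) (r : ℕ) (hr : 1 < r) (ξr : Plan G r)
    (W : Set (Set V) → ℝ) (hW : ∀ P, 0 ≤ W P) (hWr : 0 < W ξr.blocks)
    (ρ : ℝ) (K : ℝ) (hK : 0 < K)
    (φ : Set V → Set (Set V) → ℝ)
    (γ : Set (Set V) → ℝ)
    (hγ : ∀ P : Set (Set V), γ P = W P * ∏ᶠ B ∈ P, (tau G (ind G B) : ℝ) ^ ρ)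
    (M : Plan G (r - 1) → ℝ)
    (hM : ∀ ξp : Plan G (r - 1), IsAncestor G ξp ξr →
      ∀ Bold ∈ ξp.blocks \ ξr.blocks,
        ∀ Bk ∈ ξr.blocks \ ξp.blocks, ∀ Bk' ∈ ξr.blocks \ ξp.blocks, Bk ≠ Bk' →
          M ξp = φ Bold ξp.blocks *
            ((tau G (ind G Bk) : ℝ) * (tau G (ind G Bk') : ℝ) *
              ((crossEdges G Bk Bk').ncard : ℝ)) / (K * (tau G (ind G Bold) : ℝ)))
    (g : Set (Set V) → ℝ)
    (hg : ∀ Bk ∈ ξr.blocks, ∀ Bk' ∈ ξr.blocks, Bk ≠ Bk' →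
      (crossEdges G Bk Bk').Nonempty →
      g {Bk, Bk'} =
        φ (Bk ∪ Bk') ((ξr.blocks \ {Bk, Bk'}) ∪ {Bk ∪ Bk'}) *
          (W ((ξr.blocks \ {Bk, Bk'}) ∪ {Bk ∪ Bk'}) / W ξr.blocks) *
          ((tau G (ind G (Bk ∪ Bk')) : ℝ) /
              ((tau G (ind G Bk) : ℝ) * (tau G (ind G Bk') : ℝ))) ^ (ρ - 1) *
          ((crossEdges G Bk Bk').ncard : ℝ)) :
    ∑ᶠ ξp ∈ {ξp : Plan G (r - 1) | IsAncestor G ξp ξr}, γ ξp.blocks * M ξp =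
      (γ ξr.blocks / K) *
        ∑ᶠ P ∈ {P : Set (Set V) | ∃ Bk ∈ ξr.blocks, ∃ Bk' ∈ ξr.blocks,
            Bk ≠ Bk' ∧ (crossEdges G Bk Bk').Nonempty ∧ P = {Bk, Bk'}}, g P := by
  classical
  have key : ∑ᶠ ξp ∈ {ξp : Plan G (r - 1) | IsAncestor G ξp ξr}, γ ξp.blocks * M ξp =
      ∑ᶠ P ∈ {P : Set (Set V) | ∃ Bk ∈ ξr.blocks, ∃ Bk' ∈ ξr.blocks,
          Bk ≠ Bk' ∧ (crossEdges G Bk Bk').Nonempty ∧ P = {Bk, Bk'}},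
        γ ξr.blocks / K * g P := by
    apply finsum_mem_eq_of_bijOn (fun ξp => ξr.blocks \ ξp.blocks)
    · refine ⟨?_, ?_, ?_⟩
      · intro ξp hξp
        obtain ⟨Bk, Bk', hk, hk', hne, hcross, hpair, -, -⟩ := ancestor_structure hr hξp
        exact ⟨Bk, hk, Bk', hk', hne, hcross, hpair⟩
      · intro ξp h1 ξp' h2 heq
        obtain ⟨Bk, Bk', hk, hk', hne, hcross, hpair, -, hblocks⟩ := ancestor_structure hr h1
        obtain ⟨Ck, Ck', gk, gk', gne, gcross, gpair, -, gblocks⟩ := ancestor_structure hr h2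
        simp only at heq
        have hPP : ({Bk, Bk'} : Set (Set V)) = {Ck, Ck'} := by
          rw [← hpair, ← gpair, heq]
        have hUU : Bk ∪ Bk' = Ck ∪ Ck' := by
          rw [← Set.sUnion_pair, ← Set.sUnion_pair, hPP]
        apply plan_ext
        rw [hblocks, gblocks, hPP, hUU]
      · rintro P ⟨Bk, hk, Bk', hk', hne, hcross, rfl⟩
        obtain ⟨ξp, hb⟩ := merge_plan hr ξr hk hk' hne hcross
        obtain ⟨hd1, hd2⟩ := merged_diffs ξr hk hk' hne hb
        refine ⟨ξp, ?_, hd2⟩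
        show IsAncestor G ξp ξr
        rw [IsAncestor, hd1, Set.ncard_singleton]
    · intro ξp hξp
      obtain ⟨Bk, Bk', hk, hk', hne, hcross, hpair, hUmem, hblocks⟩ :=
        ancestor_structure hr hξp
      have hUnot : Bk ∪ Bk' ∉ ξr.blocks := union_notMem ξr hk hk' hne
      have hkd : Bk ∈ ξr.blocks \ ξp.blocks := hpair ▸ Or.inl rfl
      have hk'd : Bk' ∈ ξr.blocks \ ξp.blocks := hpair ▸ Or.inr rfl
      have hMval := hM ξp hξp (Bk ∪ Bk') ⟨hUmem, hUnot⟩ Bk hkd Bk' hk'd hne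
      have hgval := hg Bk hk Bk' hk' hne hcross
      have hpairsub : ({Bk, Bk'} : Set (Set V)) ⊆ ξr.blocks := by
        rintro B (rfl | rfl)
        · exact hk
        · exact hk'
      have hprod_p : ∏ᶠ B ∈ ξp.blocks, (tau G (ind G B) : ℝ) ^ ρ =
          (∏ᶠ B ∈ ξr.blocks \ {Bk, Bk'}, (tau G (ind G B) : ℝ) ^ ρ) *
            (tau G (ind G (Bk ∪ Bk')) : ℝ) ^ ρ := by
        rw [hblocks, finprod_mem_union (Set.disjoint_singleton_right.mpr (fun h => hUnot h.1))
          (Set.toFinite _) (Set.toFinite _), finprod_mem_singleton]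
      have hprod_r : ∏ᶠ B ∈ ξr.blocks, (tau G (ind G B) : ℝ) ^ ρ =
          (∏ᶠ B ∈ ξr.blocks \ {Bk, Bk'}, (tau G (ind G B) : ℝ) ^ ρ) *
            ((tau G (ind G Bk) : ℝ) ^ ρ * (tau G (ind G Bk') : ℝ) ^ ρ) := by
        conv_lhs => rw [← Set.diff_union_of_subset hpairsub]
        rw [finprod_mem_union (Set.disjoint_left.mpr (fun B hB hBp => hB.2 hBp))
          (Set.toFinite _) (Set.toFinite _), finprod_mem_pair hne]
      show γ ξp.blocks * M ξp = γ ξr.blocks / K * g (ξr.blocks \ ξp.blocks)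
      rw [hpair, hγ ξp.blocks, hγ ξr.blocks, hMval, hgval, hprod_p, hprod_r, ← hblocks]
      have ha : (0 : ℝ) < (tau G (ind G Bk) : ℝ) :=
        Nat.cast_pos.mpr (tau_pos (ξr.blocks_connected Bk hk))
      have hb : (0 : ℝ) < (tau G (ind G Bk') : ℝ) :=
        Nat.cast_pos.mpr (tau_pos (ξr.blocks_connected Bk' hk'))
      have hx : (0 : ℝ) < (tau G (ind G (Bk ∪ Bk')) : ℝ) :=
        Nat.cast_pos.mpr (tau_pos (union_connected_of_cross (ξr.blocks_connected Bk hk)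
          (ξr.blocks_connected Bk' hk') hcross))
      set a := (tau G (ind G Bk) : ℝ)
      set b := (tau G (ind G Bk') : ℝ)
      set x := (tau G (ind G (Bk ∪ Bk')) : ℝ)
      have hab : (0 : ℝ) < a * b := mul_pos ha hb
      have hdiv : (x / (a * b)) ^ (ρ - 1) = (x ^ ρ / x) / ((a * b) ^ ρ / (a * b)) := by
        rw [Real.div_rpow hx.le hab.le, Real.rpow_sub hx, Real.rpow_sub hab, Real.rpow_one,
          Real.rpow_one]
      have hmulab : a ^ ρ * b ^ ρ = (a * b) ^ ρ := (Real.mul_rpow ha.le hb.le).symm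
      have hX : (0 : ℝ) < x ^ ρ := Real.rpow_pos_of_pos hx ρ
      have hAB : (0 : ℝ) < (a * b) ^ ρ := Real.rpow_pos_of_pos hab ρ
      rw [hdiv, hmulab]
      field_simp
  rw [key]
  have hfin : ({P : Set (Set V) | ∃ Bk ∈ ξr.blocks, ∃ Bk' ∈ ξr.blocks,
      Bk ≠ Bk' ∧ (crossEdges G Bk Bk').Nonempty ∧ P = {Bk, Bk'}}).Finite := Set.toFinite _
  rw [show {P : Set (Set V) | ∃ Bk ∈ ξr.blocks, ∃ Bk' ∈ ξr.blocks,
      Bk ≠ Bk' ∧ (crossEdges G Bk Bk').Nonempty ∧ P = {Bk, Bk'}} = ↑hfin.toFinset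
    from hfin.coe_toFinset.symm, finsum_mem_coe_finset, finsum_mem_coe_finset, Finset.mul_sum]

end Redist
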